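/- Let B be a base of a matroid M and X an independent set of M. Then there exists an injection π : X → B such that for every x ∈ X, the set B + x − π(x) is independent (indeed a base). -/

import Mathlib

open Set

/-- An independent set contained in the closure of `T` has cardinality at most that of `T`. -/
lemma indep_encard_le_of_subset_closure {α : Type*} {M : Matroid α} {S T : Set α}
    (hS : M.Indep S) (hT : T ⊆ M.E) (h : S ⊆ M.closure T) : S.encard ≤ T.encard := by
  obtain ⟨I, hI⟩ := M.exists_isBasis T hT
  by_contra hlt
  push_neg at hlt
  have hIS : I.encard < S.encard :=
    lt_of_le_of_lt (Set.encard_mono hI.subset) hlt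
  obtain ⟨e, he, hins⟩ := hI.indep.augment hS hIS
  have hecl : e ∈ M.closure I := by
    rw [hI.closure_eq_closure]
    exact h he.1
  exact (hI.indep.notMem_closure_iff_of_notMem he.2
    (hS.subset_ground he.1)).mpr hins hecl

/-- Each element `x` of the ground set lies in the closure of the set of elements `y ∈ B`
for which `B + x - y` is a base. -/
lemma mem_closure_exchange_set {α : Type*} {M : Matroid α} [M.Finite] {B : Set α}
    (hB : M.IsBase B) {x : α} (hx : x ∈ M.E) :
    x ∈ M.closure {y ∈ B | M.IsBase (insert x (B \ {y}))} := by
  set A : Set α := {y ∈ B | M.IsBase (insert x (B \ {y}))} with hA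
  have hAB : A ⊆ B := fun y hy ↦ hy.1
  have hAE : A ⊆ M.E := hAB.trans hB.subset_ground
  by_cases hxB : x ∈ B
  · have hxA : x ∈ A := by
      refine ⟨hxB, ?_⟩
      rw [Set.insert_diff_singleton, Set.insert_eq_self.mpr hxB]
      exact hB
    exact M.subset_closure A hAE hxA
  -- x ∉ B
  by_contra hxcl
  have hind : M.Indep (insert x A) := by
    rw [(hB.indep.subset hAB).insert_indep_iff_of_notMem (fun h ↦ hxB (hAB h))]
    exact ⟨hx, hxcl⟩
  have hsub : insert x A ⊆ insert x B := Set.insert_subset_insert hAB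
  obtain ⟨B'', hB'', hsubB''⟩ := hind.subset_isBasis_of_subset hsub
    (Set.insert_subset hx hB.subset_ground)
  have hB''base : M.IsBase B'' := by
    refine hB''.indep.isBase_of_spanning ?_
    have hsp : M.Spanning (insert x B) := hB.spanning.superset (Set.subset_insert _ _)
      (Set.insert_subset hx hB.subset_ground)
    rw [Matroid.spanning_iff_closure_eq]
    rw [hB''.closure_eq_closure]
    rwa [Matroid.spanning_iff_closure_eq] at hsp
  have hxB'' : x ∈ B'' := hsubB'' (Set.mem_insert _ _)
  -- there is some y ∈ B \ B''
  have hBne : ¬ B ⊆ B'' := by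
    intro hcon
    have : B = B'' := hB.eq_of_subset_isBase hB''base hcon
    exact hxB (this ▸ hxB'')
  obtain ⟨y, hyB, hyB''⟩ := Set.not_subset.mp hBne
  -- B'' ⊆ insert x (B \ {y}) and they have the same cardinality
  have hsub2 : B'' ⊆ insert x (B \ {y}) := by
    intro z hz
    rcases hB''.subset hz with rfl | hzB
    · exact Set.mem_insert _ _
    · exact Set.mem_insert_of_mem _ ⟨hzB, fun h ↦ hyB'' (h ▸ hz)⟩
  have hBfin : B.Finite := M.ground_finite.subset hB.subset_ground
  have hcard : (insert x (B \ {y})).encard ≤ B''.encard := by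
    have h1 : (insert x (B \ {y})).encard = (B \ {y}).encard + 1 :=
      Set.encard_insert_of_notMem (fun h ↦ hxB h.1)
    have h2 : (B \ {y}).encard + 1 = B.encard := by
      rw [Set.encard_diff_singleton_add_one hyB]
    have h3 : B''.encard = B.encard := hB''base.encard_eq_encard_of_isBase hB
    rw [h1, h2, h3]
  have heq : B'' = insert x (B \ {y}) := by
    refine (((hBfin.subset (Set.diff_subset)).insert x).eq_of_subset_of_encard_le' hsub2
      hcard)
  have : y ∈ A := ⟨hyB, heq ▸ hB''base⟩
  exact hyB'' (hsubB'' (Set.mem_insert_of_mem _ this))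

/-- Let `B` be a base of a (finite) matroid `M` and `X` an independent set. Then there
is an injection `π : X → B` such that for every `x ∈ X`, `B + x − π(x)` is independent
— indeed a base. -/
theorem exists_base_exchange_injection {α : Type*} (M : Matroid α) [M.Finite]
    (B X : Set α) (hB : M.IsBase B) (hX : M.Indep X) :
    ∃ π : α → α, Set.InjOn π X ∧ Set.MapsTo π X B ∧
      ∀ x ∈ X, M.IsBase (insert x (B \ {π x})) := by
  classical
  have hXfin : X.Finite := M.ground_finite.subset hX.subset_ground
  have hBfin : B.Finite := M.ground_finite.subset hB.subset_ground
  -- the exchange sets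
  set A : α → Set α := fun x ↦ {y ∈ B | M.IsBase (insert x (B \ {y}))} with hA
  have hAfin : ∀ x, (A x).Finite := fun x ↦ hBfin.subset (fun y hy ↦ hy.1)
  haveI : Fintype X := hXfin.fintype
  set t : X → Finset α := fun x ↦ (hAfin x.1).toFinset with ht
  -- Hall's condition
  have hall : ∀ s : Finset X, s.card ≤ (s.biUnion t).card := by
    intro s
    set T : Set α := ↑(s.biUnion t) with hT
    have hTE : T ⊆ M.E := by
      intro y hy
      simp only [hT, Finset.coe_biUnion, Set.mem_iUnion, Finset.mem_coe] at hy
      obtain ⟨x, _, hyx⟩ := hy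
      rw [ht] at hyx
      simp only [Set.Finite.mem_toFinset] at hyx
      exact hB.subset_ground hyx.1
    set S : Set α := ↑(s.image (Subtype.val)) with hS
    have hSX : S ⊆ X := by
      intro z hz
      simp only [hS, Finset.coe_image, Set.mem_image, Finset.mem_coe] at hz
      obtain ⟨⟨z', hz'⟩, _, rfl⟩ := hz
      exact hz'
    have hScl : S ⊆ M.closure T := by
      intro z hz
      simp only [hS, Finset.coe_image, Set.mem_image, Finset.mem_coe] at hz
      obtain ⟨x, hxs, rfl⟩ := hz
      refine (M.closure_subset_closure ?_) (mem_closure_exchange_set hB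
        (hX.subset_ground x.2))
      intro y hy
      simp only [hT, Finset.coe_biUnion, Set.mem_iUnion, Finset.mem_coe]
      exact ⟨x, hxs, by simpa [ht, hA] using hy⟩
    have hcard := indep_encard_le_of_subset_closure (hX.subset hSX) hTE hScl
    have hSc : S.encard = (s.card : ℕ∞) := by
      rw [hS, Set.encard_coe_eq_coe_finsetCard, Finset.card_image_of_injective _
        Subtype.val_injective]
    have hTc : T.encard = ((s.biUnion t).card : ℕ∞) := by
      rw [hT, Set.encard_coe_eq_coe_finsetCard]
    rw [hSc, hTc] at hcard
    exact_mod_cast hcard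
  obtain ⟨f, hfinj, hft⟩ := (Finset.all_card_le_biUnion_card_iff_exists_injective t).mp hall
  refine ⟨fun a ↦ if h : a ∈ X then f ⟨a, h⟩ else a, ?_, ?_, ?_⟩
  · intro a ha b hb hab
    simp only [dif_pos ha, dif_pos hb] at hab
    exact Subtype.ext_iff.mp (hfinj hab)
  · intro a ha
    simp only [dif_pos ha]
    have := hft ⟨a, ha⟩
    rw [ht] at this
    simp only [Set.Finite.mem_toFinset] at this
    exact this.1
  · intro x hx
    simp only [dif_pos hx]
    have := hft ⟨x, hx⟩
    rw [ht] at this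
    simp only [Set.Finite.mem_toFinset] at this
    exact this.2
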